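/- arXiv:2009.00373 — 2 statements merged into one kernel-verified Lean document; each statement's English description precedes it below -/
import Mathlib

section
/- With L, d, D as above, let S ⊆ L with |S| ≥ 2 and let S' ⊆ L \ S be nonempty with S ∩ S' = ∅. Then D(S ∪ S') ≤ D(S) + Σ_{x ∈ S'} min_{l ∈ S} d(x, l). -/
open Finset

noncomputable def dmin {L : Type*} [DecidableEq L] (d : L → L → ℝ) (x : L) (T : Finset L) : ℝ :=
  sInf ((T.image (d x) : Finset ℝ) : Set ℝ)

noncomputable def aggDiv {L : Type*} [DecidableEq L] (d : L → L → ℝ) (S : Finset L) : ℝ :=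
  ∑ l ∈ S, dmin d l (S.erase l)

lemma dmin_anti {L : Type*} [DecidableEq L] (d : L → L → ℝ) (x : L) {T T' : Finset L}
    (hT : T.Nonempty) (hTT : T ⊆ T') : dmin d x T' ≤ dmin d x T := by
  apply csInf_le_csInf
  · exact (Finset.finite_toSet _).bddBelow
  · exact_mod_cast (hT.image (d x))
  · exact_mod_cast Finset.image_subset_image hTT

theorem stmt4 {L : Type*} [Fintype L] [DecidableEq L] (d : L → L → ℝ)
    (hsym : ∀ a b, d a b = d b a) (hnn : ∀ a b, 0 ≤ d a b)
    (S S' : Finset L) (hS : 2 ≤ S.card) (hdisj : Disjoint S S') (hne : S'.Nonempty) :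
    aggDiv d (S ∪ S') ≤ aggDiv d S + ∑ x ∈ S', dmin d x S := by
  unfold aggDiv
  rw [Finset.sum_union hdisj]
  gcongr with l hl x hx
  · apply dmin_anti
    · apply Finset.card_pos.mp
      rw [Finset.card_erase_of_mem hl]
      omega
    · exact Finset.erase_subset_erase _ Finset.subset_union_left
  · apply dmin_anti
    · exact Finset.card_pos.mp (by omega)
    · intro y hy
      refine Finset.mem_erase.mpr ⟨?_, Finset.mem_union_left _ hy⟩
      rintro rfl
      exact (Finset.disjoint_left.mp hdisj hy) hx
end

section
/- With L, d, D as above, suppose S ⊆ L with |S| ≥ 2, x ∉ S, and d(x, l) > min_{l' ∈ S \ {l}} d(l, l') for every l ∈ S. Then D̂ = Σ_{l ∈ S} min( min_{l' ∈ S \ {l}} d(l, l'), d(l, x) ) equals D(S), and consequently D(S ∪ {x}) = D(S) + min_{l ∈ S} d(x, l). -/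
open Finset

lemma dmin_insert {L : Type*} [DecidableEq L] (d : L → L → ℝ) (l a : L) (T : Finset L)
    (hT : T.Nonempty) : dmin d l (insert a T) = min (d l a) (dmin d l T) := by
  unfold dmin
  rw [Finset.image_insert, Finset.coe_insert]
  rw [csInf_insert ((T.image (d l)).finite_toSet.bddBelow)
    (by simpa using hT.image (d l))]


theorem stmt16 {L : Type*} [Fintype L] [DecidableEq L] (d : L → L → ℝ)
    (hsym : ∀ a b, d a b = d b a) (hnn : ∀ a b, 0 ≤ d a b)
    (S : Finset L) (hS : 2 ≤ S.card) (x : L) (hx : x ∉ S)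
    (hgt : ∀ l ∈ S, dmin d l (S.erase l) < d x l) :
    (∑ l ∈ S, min (dmin d l (S.erase l)) (d l x)) = aggDiv d S ∧
      aggDiv d (insert x S) = aggDiv d S + dmin d x S := by
  have hmin : ∀ l ∈ S, min (dmin d l (S.erase l)) (d l x) = dmin d l (S.erase l) := by
    intro l hl
    exact min_eq_left (by rw [hsym l x]; exact (hgt l hl).le)
  constructor
  · exact Finset.sum_congr rfl hmin
  · unfold aggDiv
    rw [Finset.sum_insert hx, Finset.erase_insert hx, add_comm]
    congr 1
    apply Finset.sum_congr rfl
    intro l hl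
    have hne : x ≠ l := fun h => hx (h ▸ hl)
    have hEnne : (S.erase l).Nonempty := by
      rw [← Finset.card_pos, Finset.card_erase_of_mem hl]; omega
    rw [Finset.erase_insert_of_ne hne, dmin_insert d l x _ hEnne,
      min_eq_right (by rw [hsym l x]; exact (hgt l hl).le)]
end
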